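/- Let k ≥ 1 and ℓ ≥ 0 be integers and let u : ℝ → ℝ be smooth (C^∞). Define F(y) = (y^ℓ/ℓ!) · S_k(u)(y). Then for every integer j with 0 ≤ j ≤ k + ℓ − 1: if j ≠ ℓ then F^{(j)}(0) = 0, while for j = ℓ one has F^{(ℓ)}(0) = u(0). -/

import Mathlib

private lemma iter_smooth {u : ℝ → ℝ} (hu : ContDiff ℝ (⊤ : ℕ∞) u) (i : ℕ) :
    ContDiff ℝ (⊤ : ℕ∞) (iteratedDeriv i u) := by
  rw [iteratedDeriv_eq_iterate]; exact hu.iterate_deriv i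

private lemma iter_hasDerivAt {u : ℝ → ℝ} (hu : ContDiff ℝ (⊤ : ℕ∞) u) (i : ℕ) (y : ℝ) :
    HasDerivAt (iteratedDeriv i u) (iteratedDeriv (i + 1) u y) y := by
  rw [iteratedDeriv_succ]
  exact (((iter_smooth hu i).differentiable (by simp)) y).hasDerivAt

/-- Telescoping derivative of `S_{K+1}(u)`. -/
private lemma S_hasDerivAt {u : ℝ → ℝ} (hu : ContDiff ℝ (⊤ : ℕ∞) u) (K : ℕ) (y : ℝ) :
    HasDerivAt (fun y : ℝ => ∑ i ∈ Finset.range (K + 1),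
        ((-1 : ℝ) ^ i * y ^ i / (Nat.factorial i : ℝ)) * iteratedDeriv i u y)
      (((-1 : ℝ) ^ K * y ^ K / (Nat.factorial K : ℝ)) * iteratedDeriv (K + 1) u y) y := by
  induction K with
  | zero =>
      have h0 : (fun y : ℝ => ∑ i ∈ Finset.range 1,
          ((-1 : ℝ) ^ i * y ^ i / (Nat.factorial i : ℝ)) * iteratedDeriv i u y) = u := by
        funext y; simp
      rw [h0]
      simpa using iter_hasDerivAt hu 0 y
  | succ K ih =>
      have h0 : (fun y : ℝ => ∑ i ∈ Finset.range (K + 1 + 1),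
          ((-1 : ℝ) ^ i * y ^ i / (Nat.factorial i : ℝ)) * iteratedDeriv i u y)
          = (fun y : ℝ => (∑ i ∈ Finset.range (K + 1),
              ((-1 : ℝ) ^ i * y ^ i / (Nat.factorial i : ℝ)) * iteratedDeriv i u y)
            + ((-1 : ℝ) ^ (K + 1) * y ^ (K + 1) / (Nat.factorial (K + 1) : ℝ))
                * iteratedDeriv (K + 1) u y) := by
        funext y; rw [Finset.sum_range_succ]
      rw [h0]
      have hc : HasDerivAt (fun y : ℝ =>
          (-1 : ℝ) ^ (K + 1) * y ^ (K + 1) / (Nat.factorial (K + 1) : ℝ))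
          ((-1 : ℝ) ^ (K + 1) * ((K + 1 : ℕ) * y ^ K) / (Nat.factorial (K + 1) : ℝ)) y :=
        ((hasDerivAt_pow (K + 1) y).const_mul ((-1 : ℝ) ^ (K + 1))).div_const _
      have hprod := hc.mul (iter_hasDerivAt hu (K + 1) y)
      have htot := ih.add hprod
      refine htot.congr_deriv ?_
      have hfac : ((Nat.factorial (K + 1) : ℝ)) = (K + 1) * (Nat.factorial K : ℝ) := by
        rw [Nat.factorial_succ]; push_cast; ring
      have hK : (Nat.factorial K : ℝ) ≠ 0 := Nat.cast_ne_zero.mpr (Nat.factorial_ne_zero K)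
      have hK1 : ((K : ℝ) + 1) ≠ 0 := by positivity
      rw [hfac]
      push_cast
      field_simp
      ring

private lemma jets_aux {u : ℝ → ℝ} (hu : ContDiff ℝ (⊤ : ℕ∞) u) (K l : ℕ) :
    ∀ j : ℕ, j ≤ l → ∃ h : ℝ → ℝ, ContDiff ℝ (⊤ : ℕ∞) h ∧
      iteratedDeriv j
        (fun y : ℝ => (y ^ l / (Nat.factorial l : ℝ)) *
          ∑ i ∈ Finset.range (K + 1),
            ((-1 : ℝ) ^ i * y ^ i / (Nat.factorial i : ℝ)) * iteratedDeriv i u y)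
        = fun y : ℝ => (y ^ (l - j) / (Nat.factorial (l - j) : ℝ)) *
            (∑ i ∈ Finset.range (K + 1),
              ((-1 : ℝ) ^ i * y ^ i / (Nat.factorial i : ℝ)) * iteratedDeriv i u y)
          + y ^ (K + 1 + (l - j)) * h y := by
  intro j hj
  induction j with
  | zero =>
      exact ⟨0, contDiff_const, by funext y; simp [iteratedDeriv_zero]⟩
  | succ j ih =>
      obtain ⟨h, hh, heq⟩ := ih (le_of_lt (Nat.lt_of_succ_le hj))
      obtain ⟨M, hM⟩ : ∃ M, l - j = M + 1 := ⟨l - j - 1, by omega⟩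
      have hMj : l - (j + 1) = M := by omega
      refine ⟨fun y => ((-1 : ℝ) ^ K / ((Nat.factorial (M + 1) : ℝ) * (Nat.factorial K : ℝ)))
          * iteratedDeriv (K + 1) u y
        + (((K : ℝ) + M + 2) * h y + y * deriv h y), ?_, ?_⟩
      · have hdh : ContDiff ℝ (⊤ : ℕ∞) (deriv h) := (contDiff_infty_iff_deriv.mp hh).2
        exact ((contDiff_const.mul (iter_smooth hu (K + 1))).add
          ((contDiff_const.mul hh).add (contDiff_id.mul hdh)))
      · rw [iteratedDeriv_succ, heq, hMj, hM]
        funext y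
        have hS := S_hasDerivAt hu K y
        have h1 : HasDerivAt (fun y : ℝ => y ^ (M + 1) / (Nat.factorial (M + 1) : ℝ))
            (((M + 1 : ℕ) * y ^ M) / (Nat.factorial (M + 1) : ℝ)) y :=
          (hasDerivAt_pow (M + 1) y).div_const _
        have h2 := h1.mul hS
        have h3 : HasDerivAt (fun y : ℝ => y ^ (K + 1 + (M + 1)) * h y)
            (((K + 1 + (M + 1) : ℕ) * y ^ (K + 1 + M)) * h y
              + y ^ (K + 1 + (M + 1)) * deriv h y) y :=
          (hasDerivAt_pow _ y).mul ((hh.differentiable (by simp) y).hasDerivAt)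
        have htot := (h2.add h3).deriv
        simp only [Pi.add_def, Pi.mul_def] at htot
        rw [htot]
        have hfac : ((Nat.factorial (M + 1) : ℝ)) = (M + 1) * (Nat.factorial M : ℝ) := by
          rw [Nat.factorial_succ]; push_cast; ring
        have hMf : (Nat.factorial M : ℝ) ≠ 0 := Nat.cast_ne_zero.mpr (Nat.factorial_ne_zero M)
        have hKf : (Nat.factorial K : ℝ) ≠ 0 := Nat.cast_ne_zero.mpr (Nat.factorial_ne_zero K)
        have hM1 : ((M : ℝ) + 1) ≠ 0 := by positivity
        rw [hfac]
        push_cast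
        field_simp
        ring

private lemma jets_aux2 {u : ℝ → ℝ} (hu : ContDiff ℝ (⊤ : ℕ∞) u) (K l : ℕ) :
    ∀ n : ℕ, n ≤ K → ∃ h : ℝ → ℝ, ContDiff ℝ (⊤ : ℕ∞) h ∧
      iteratedDeriv (l + n + 1)
        (fun y : ℝ => (y ^ l / (Nat.factorial l : ℝ)) *
          ∑ i ∈ Finset.range (K + 1),
            ((-1 : ℝ) ^ i * y ^ i / (Nat.factorial i : ℝ)) * iteratedDeriv i u y)
        = fun y : ℝ => y ^ (K - n) * h y := by
  intro n hn
  induction n with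
  | zero =>
      obtain ⟨h, hh, heq⟩ := jets_aux hu K l l le_rfl
      simp only [Nat.sub_self] at heq
      refine ⟨fun y => ((-1 : ℝ) ^ K / (Nat.factorial K : ℝ)) * iteratedDeriv (K + 1) u y
        + (((K : ℝ) + 1) * h y + y * deriv h y), ?_, ?_⟩
      · have hdh : ContDiff ℝ (⊤ : ℕ∞) (deriv h) := (contDiff_infty_iff_deriv.mp hh).2
        exact ((contDiff_const.mul (iter_smooth hu (K + 1))).add
          ((contDiff_const.mul hh).add (contDiff_id.mul hdh)))
      · rw [show l + 0 + 1 = l + 1 from rfl, iteratedDeriv_succ, heq]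
        funext y
        have hS := S_hasDerivAt hu K y
        have h1 : HasDerivAt (fun y : ℝ => (y ^ 0 / (Nat.factorial 0 : ℝ)) *
            ∑ i ∈ Finset.range (K + 1),
              ((-1 : ℝ) ^ i * y ^ i / (Nat.factorial i : ℝ)) * iteratedDeriv i u y)
            (((-1 : ℝ) ^ K * y ^ K / (Nat.factorial K : ℝ)) * iteratedDeriv (K + 1) u y) y := by
          have : (fun y : ℝ => (y ^ 0 / (Nat.factorial 0 : ℝ)) *
              ∑ i ∈ Finset.range (K + 1),
                ((-1 : ℝ) ^ i * y ^ i / (Nat.factorial i : ℝ)) * iteratedDeriv i u y)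
              = fun y : ℝ => ∑ i ∈ Finset.range (K + 1),
                ((-1 : ℝ) ^ i * y ^ i / (Nat.factorial i : ℝ)) * iteratedDeriv i u y := by
            funext y; simp
          rw [this]; exact hS
        have h3 : HasDerivAt (fun y : ℝ => y ^ (K + 1 + 0) * h y)
            (((K + 1 + 0 : ℕ) * y ^ (K + 0)) * h y + y ^ (K + 1 + 0) * deriv h y) y :=
          (hasDerivAt_pow _ y).mul ((hh.differentiable (by simp) y).hasDerivAt)
        have htot := (h1.add h3).deriv
        simp only [Pi.add_def, Pi.mul_def] at htot
        rw [htot]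
        simp only [Nat.sub_zero, Nat.add_zero]
        push_cast
        ring
  | succ n ih =>
      obtain ⟨h, hh, heq⟩ := ih (by omega)
      obtain ⟨P, hP⟩ : ∃ P, K - n = P + 1 := ⟨K - n - 1, by omega⟩
      have hPn : K - (n + 1) = P := by omega
      refine ⟨fun y => ((P : ℝ) + 1) * h y + y * deriv h y, ?_, ?_⟩
      · have hdh : ContDiff ℝ (⊤ : ℕ∞) (deriv h) := (contDiff_infty_iff_deriv.mp hh).2
        exact (contDiff_const.mul hh).add (contDiff_id.mul hdh)
      · rw [show l + (n + 1) + 1 = (l + n + 1) + 1 from rfl, iteratedDeriv_succ, heq, hP, hPn]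
        funext y
        have h3 : HasDerivAt (fun y : ℝ => y ^ (P + 1) * h y)
            (((P + 1 : ℕ) * y ^ P) * h y + y ^ (P + 1) * deriv h y) y :=
          (hasDerivAt_pow _ y).mul ((hh.differentiable (by simp) y).hasDerivAt)
        rw [h3.deriv]
        push_cast
        ring

/-- Jet identity at the boundary for `F(y) = (y^ℓ/ℓ!)·S_k(u)(y)`, where
`S_k(u)(y) = ∑_{j=0}^{k-1} ((-1)^j y^j / j!) u^{(j)}(y)` and `u` is smooth:
for `0 ≤ j ≤ k+ℓ-1` with `j ≠ ℓ` one has `F^{(j)}(0) = 0`, and `F^{(ℓ)}(0) = u(0)`. -/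
theorem jets_boundary_correction (k l : ℕ) (hk : 1 ≤ k) (u : ℝ → ℝ)
    (hu : ContDiff ℝ (⊤ : ℕ∞) u) :
    (∀ j : ℕ, j ≤ k + l - 1 → j ≠ l →
      iteratedDeriv j
        (fun y : ℝ => (y ^ l / (Nat.factorial l : ℝ)) *
          ∑ i ∈ Finset.range k,
            ((-1 : ℝ) ^ i * y ^ i / (Nat.factorial i : ℝ)) * iteratedDeriv i u y) 0 = 0) ∧
    iteratedDeriv l
      (fun y : ℝ => (y ^ l / (Nat.factorial l : ℝ)) *
        ∑ i ∈ Finset.range k,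
          ((-1 : ℝ) ^ i * y ^ i / (Nat.factorial i : ℝ)) * iteratedDeriv i u y) 0 = u 0 := by
  obtain ⟨K, rfl⟩ : ∃ K, k = K + 1 := ⟨k - 1, by omega⟩
  have hS0 : (∑ i ∈ Finset.range (K + 1),
      ((-1 : ℝ) ^ i * (0 : ℝ) ^ i / (Nat.factorial i : ℝ)) * iteratedDeriv i u 0) = u 0 := by
    rw [Finset.sum_eq_single 0]
    · simp
    · intro i _ hi
      obtain ⟨m, rfl⟩ : ∃ m, i = m + 1 := ⟨i - 1, by omega⟩
      simp [zero_pow]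
    · simp
  constructor
  · intro j hj hjl
    rcases lt_or_gt_of_ne hjl with hlt | hgt
    · obtain ⟨h, _, heq⟩ := jets_aux hu K l j (le_of_lt hlt)
      rw [heq]
      have h1 : l - j ≠ 0 := by omega
      have h2 : K + 1 + (l - j) ≠ 0 := by omega
      simp [zero_pow h1, zero_pow h2]
    · obtain ⟨h, _, heq⟩ := jets_aux2 hu K l (j - l - 1) (by omega)
      rw [show j = l + (j - l - 1) + 1 by omega, heq]
      have h1 : K - (j - l - 1) ≠ 0 := by omega
      simp [zero_pow h1]
  · obtain ⟨h, _, heq⟩ := jets_aux hu K l l le_rfl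
    rw [heq]
    simp only [Nat.sub_self]
    rw [hS0]
    simp
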